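/- The quotient ℤ-module ℤ⁴ / span{(1238,−18,−358,1), (−1312,52,−1,0), (5586,−221,0,0)} is a free ℤ-module. -/

import Mathlib

private def phi : (Fin 4 → ℤ) →ₗ[ℤ] ℤ where
  toFun x := 221 * x 0 + 5586 * x 1 + 520 * x 2 + 13110 * x 3
  map_add' x y := by simp [Pi.add_apply]; ring
  map_smul' c x := by simp [Pi.smul_apply, smul_eq_mul]; ring

/-- `ℤ⁴ / span{(1238,−18,−358,1), (−1312,52,−1,0), (5586,−221,0,0)}` is a free `ℤ`-module. -/
theorem freudenthal_degree23_cokernel_free :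
    Module.Free ℤ ((Fin 4 → ℤ) ⧸
      Submodule.span ℤ
        ({![1238, -18, -358, 1], ![-1312, 52, -1, 0], ![5586, -221, 0, 0]} :
          Set (Fin 4 → ℤ))) := by
  have hsurj : Function.Surjective phi := by
    intro n
    refine ⟨![-733 * n, 29 * n, 0, 0], ?_⟩
    show 221 * _ + 5586 * _ + 520 * _ + 13110 * _ = n
    simp [Matrix.cons_val_zero, Matrix.cons_val_one]
    ring
  have hspan : Submodule.span ℤ
      ({![1238, -18, -358, 1], ![-1312, 52, -1, 0], ![5586, -221, 0, 0]} :
        Set (Fin 4 → ℤ)) = LinearMap.ker phi := by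
    apply le_antisymm
    · rw [Submodule.span_le]
      rintro v (rfl | rfl | rfl) <;>
        · simp only [SetLike.mem_coe, LinearMap.mem_ker]
          show 221 * _ + 5586 * _ + 520 * _ + 13110 * _ = (0:ℤ)
          norm_num [Matrix.cons_val_two, Matrix.cons_val_three, Matrix.vecHead, Matrix.vecTail]
    · intro x hx
      rw [LinearMap.mem_ker] at hx
      have h : 221 * x 0 + 5586 * x 1 + 520 * x 2 + 13110 * x 3 = 0 := hx
      have hx2 : x = (x 3) • ![(1238 : ℤ), -18, -358, 1] +
          (-(x 2 + 358 * x 3)) • ![(-1312 : ℤ), 52, -1, 0] +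
          (29 * (x 0 - 1312 * x 2 - 470934 * x 3) +
            733 * (x 1 + 52 * x 2 + 18634 * x 3)) • ![(5586 : ℤ), -221, 0, 0] := by
        funext i
        fin_cases i <;>
          simp [Pi.add_apply, Pi.smul_apply, smul_eq_mul] <;> linarith [h]
      rw [hx2]
      refine Submodule.add_mem _ (Submodule.add_mem _ ?_ ?_) ?_ <;>
        exact Submodule.smul_mem _ _ (Submodule.subset_span (by simp))
  rw [hspan]
  exact Module.Free.of_equiv (phi.quotKerEquivOfSurjective hsurj).symm
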